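/- arXiv:2101.05911 — 7 statements merged into one kernel-verified Lean document; each statement's English description precedes it below -/
import Mathlib

section
/- For all nonnegative reals a_1,…,a_n, (∑ a_i²)² − ∑ a_i⁴ ≤ (1/8)·(∑ a_i)⁴. -/
theorem stmt_0 (n : ℕ) (a : Fin n → ℝ) (ha : ∀ i, 0 ≤ a i) :
    (∑ i, (a i) ^ 2) ^ 2 - ∑ i, (a i) ^ 4 ≤ (1 / 8) * (∑ i, a i) ^ 4 := by
  set S := ∑ i, a i with hS
  set Q := ∑ i, (a i) ^ 2 with hQ
  have hsplit : ∀ f : Fin n → ℝ, (∑ i, f i) * (∑ j, f j)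
      = ∑ i, f i * f i + ∑ p ∈ Finset.univ.offDiag, f p.1 * f p.2 := by
    intro f
    rw [Finset.sum_mul_sum, ← Finset.sum_product', ← Finset.diag_union_offDiag Finset.univ,
        Finset.sum_union (Finset.disjoint_diag_offDiag _), Finset.sum_diag]
  have hQ2 : Q ^ 2 - ∑ i, (a i) ^ 4
      = ∑ p ∈ Finset.univ.offDiag, (a p.1) ^ 2 * (a p.2) ^ 2 := by
    have := hsplit (fun i => (a i) ^ 2)
    simp only [← pow_add] at this
    rw [hQ, sq]
    rw [this]
    ring_nf
  have hS2 : S ^ 2 - Q = ∑ p ∈ Finset.univ.offDiag, a p.1 * a p.2 := by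
    have := hsplit a
    simp only [← sq] at this
    rw [hS, hQ]
    linarith [this]
  have hQnn : 0 ≤ Q := Finset.sum_nonneg fun i _ => sq_nonneg _
  have key : ∑ p ∈ Finset.univ.offDiag, (a p.1) ^ 2 * (a p.2) ^ 2
      ≤ ∑ p ∈ Finset.univ.offDiag, (1 / 2) * Q * (a p.1 * a p.2) := by
    refine Finset.sum_le_sum fun p hp => ?_
    obtain ⟨-, -, hne⟩ := Finset.mem_offDiag.mp hp
    have hsub : ({p.1, p.2} : Finset (Fin n)) ⊆ Finset.univ := Finset.subset_univ _
    have hQge : (a p.1) ^ 2 + (a p.2) ^ 2 ≤ Q := by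
      have := Finset.sum_le_sum_of_subset_of_nonneg hsub
        (fun i _ _ => sq_nonneg (a i))
      rwa [Finset.sum_pair hne] at this
    have h1 := ha p.1
    have h2 := ha p.2
    nlinarith [sq_nonneg (a p.1 - a p.2), mul_nonneg h1 h2,
      mul_nonneg (mul_nonneg h1 h2) (sq_nonneg (a p.1 - a p.2))]
  rw [hQ2]
  calc ∑ p ∈ Finset.univ.offDiag, (a p.1) ^ 2 * (a p.2) ^ 2
      ≤ ∑ p ∈ Finset.univ.offDiag, (1 / 2) * Q * (a p.1 * a p.2) := key
    _ = (1 / 2) * Q * (S ^ 2 - Q) := by rw [← Finset.mul_sum, hS2]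
    _ ≤ 1 / 8 * S ^ 4 := by nlinarith [sq_nonneg (S ^ 2 - 2 * Q), hQnn]
end

section
/- For all nonnegative reals a_1,…,a_n and b_1,…,b_n, (∑ a_i b_i)² − ∑ a_i² b_i² ≤ (1/8)·(∑ a_i)²·(∑ b_i)². -/
open Finset

lemma offDiag_sum_mul {n : ℕ} (f : Fin n → ℝ) :
    ∑ p ∈ (univ : Finset (Fin n)).offDiag, f p.1 * f p.2
      = (∑ i, f i) ^ 2 - ∑ i, f i ^ 2 := by
  have h : (∑ i, f i) ^ 2 = ∑ p ∈ (univ : Finset (Fin n)) ×ˢ univ, f p.1 * f p.2 := by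
    rw [sq, Finset.sum_mul_sum, Finset.sum_product]
  rw [h, ← Finset.diag_union_offDiag (univ : Finset (Fin n)),
    Finset.sum_union (Finset.disjoint_diag_offDiag _), Finset.sum_diag]
  simp [sq]

theorem stmt_1 (n : ℕ) (a b : Fin n → ℝ) (ha : ∀ i, 0 ≤ a i) (hb : ∀ i, 0 ≤ b i) :
    (∑ i, a i * b i) ^ 2 - ∑ i, (a i) ^ 2 * (b i) ^ 2 ≤
      (1 / 8) * (∑ i, a i) ^ 2 * (∑ i, b i) ^ 2 := by
  set A := ∑ i, a i with hAdef
  set B := ∑ i, b i with hBdef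
  have hA0 : 0 ≤ A := Finset.sum_nonneg fun i _ => ha i
  have hB0 : 0 ≤ B := Finset.sum_nonneg fun i _ => hb i
  -- rewrite LHS as off-diagonal sum
  have hx2 : ∑ i, (a i) ^ 2 * (b i) ^ 2 = ∑ i, (a i * b i) ^ 2 := by
    apply Finset.sum_congr rfl; intro i _; ring
  rw [hx2, ← offDiag_sum_mul (fun i => a i * b i)]
  rcases eq_or_lt_of_le hA0 with hA | hA
  · have hz : ∀ i, a i = 0 := by
      intro i
      have := (Finset.sum_eq_zero_iff_of_nonneg (fun i _ => ha i)).mp hA.symm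
      exact this i (mem_univ i)
    have : ∀ p ∈ (univ : Finset (Fin n)).offDiag,
        (fun i => a i * b i) p.1 * (fun i => a i * b i) p.2 = 0 := by
      intro p _; simp [hz p.1]
    rw [Finset.sum_eq_zero this]
    positivity
  rcases eq_or_lt_of_le hB0 with hB | hB
  · have hz : ∀ i, b i = 0 := by
      intro i
      have := (Finset.sum_eq_zero_iff_of_nonneg (fun i _ => hb i)).mp hB.symm
      exact this i (mem_univ i)
    have : ∀ p ∈ (univ : Finset (Fin n)).offDiag,
        (fun i => a i * b i) p.1 * (fun i => a i * b i) p.2 = 0 := by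
      intro p _; simp [hz p.1]
    rw [Finset.sum_eq_zero this]
    positivity
  -- main case
  clear_value A B
  obtain ⟨s, hsdef⟩ : ∃ s : Fin n → ℝ, s = fun i => B * a i + A * b i := ⟨_, rfl⟩
  have hs_nonneg : ∀ i, 0 ≤ s i := by
    intro i; simp only [hsdef]
    exact add_nonneg (mul_nonneg hB0 (ha i)) (mul_nonneg hA0 (hb i))
  have hs_sum : ∑ i, s i = 2 * (A * B) := by
    simp only [hsdef]
    rw [Finset.sum_add_distrib, ← Finset.mul_sum, ← Finset.mul_sum, ← hAdef, ← hBdef]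
    ring
  obtain ⟨m, hmdef⟩ : ∃ m : ℝ, m = ∑ i, s i ^ 2 := ⟨_, rfl⟩
  have hm0 : 0 ≤ m := hmdef ▸ Finset.sum_nonneg fun i _ => sq_nonneg _
  -- termwise bound on pairs
  have hpair : ∀ p ∈ (univ : Finset (Fin n)).offDiag,
      16 * (A * B) ^ 2 * ((fun i => a i * b i) p.1 * (fun i => a i * b i) p.2)
        ≤ (m / 2) * (s p.1 * s p.2) := by
    intro p hp
    obtain ⟨i, j⟩ := p
    have hij : i ≠ j := (Finset.mem_offDiag.mp hp).2.2
    have hsum_pair : s i ^ 2 + s j ^ 2 ≤ m := by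
      have h1 : ∑ k ∈ ({i, j} : Finset (Fin n)), s k ^ 2 ≤ m := by
        rw [hmdef]
        apply Finset.sum_le_sum_of_subset_of_nonneg (Finset.subset_univ _)
        intro k _ _; exact sq_nonneg _
      rwa [Finset.sum_pair hij] at h1
    have h4i : 4 * (A * B) * (a i * b i) ≤ s i ^ 2 := by
      simp only [hsdef]; nlinarith [sq_nonneg (B * a i - A * b i)]
    have h4j : 4 * (A * B) * (a j * b j) ≤ s j ^ 2 := by
      simp only [hsdef]; nlinarith [sq_nonneg (B * a j - A * b j)]
    have hsi : 0 ≤ s i := hs_nonneg i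
    have hsj : 0 ≤ s j := hs_nonneg j
    have hxi : 0 ≤ a i * b i := mul_nonneg (ha i) (hb i)
    have hxj : 0 ≤ a j * b j := mul_nonneg (ha j) (hb j)
    have hAB : 0 < A * B := mul_pos hA hB
    -- 16(AB)^2 x_i x_j ≤ s_i^2 s_j^2 ≤ (m/2) s_i s_j
    have step1 : 16 * (A * B) ^ 2 * ((a i * b i) * (a j * b j)) ≤ s i ^ 2 * s j ^ 2 := by
      nlinarith [mul_le_mul h4i h4j (by positivity) (sq_nonneg (s i))]
    have hsisj : s i * s j ≤ m / 2 := by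
      have h2 : 2 * (s i) * (s j) ≤ s i ^ 2 + s j ^ 2 := two_mul_le_add_sq _ _
      linarith
    have h0 : 0 ≤ s i * s j := mul_nonneg hsi hsj
    have step2 : s i ^ 2 * s j ^ 2 ≤ (m / 2) * (s i * s j) := by
      calc s i ^ 2 * s j ^ 2 = (s i * s j) * (s i * s j) := by ring
        _ ≤ (m / 2) * (s i * s j) := mul_le_mul_of_nonneg_right hsisj h0
    exact le_trans step1 step2
  have hsumbound : 16 * (A * B) ^ 2 *
      (∑ p ∈ (univ : Finset (Fin n)).offDiag,
        (fun i => a i * b i) p.1 * (fun i => a i * b i) p.2)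
      ≤ (m / 2) * (4 * (A * B) ^ 2 - m) := by
    calc 16 * (A * B) ^ 2 * (∑ p ∈ (univ : Finset (Fin n)).offDiag,
          (fun i => a i * b i) p.1 * (fun i => a i * b i) p.2)
        = ∑ p ∈ (univ : Finset (Fin n)).offDiag,
            16 * (A * B) ^ 2 * ((fun i => a i * b i) p.1 * (fun i => a i * b i) p.2) := by
          rw [Finset.mul_sum]
      _ ≤ ∑ p ∈ (univ : Finset (Fin n)).offDiag, (m / 2) * (s p.1 * s p.2) :=
          Finset.sum_le_sum hpair
      _ = (m / 2) * ∑ p ∈ (univ : Finset (Fin n)).offDiag, s p.1 * s p.2 := by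
          rw [Finset.mul_sum]
      _ = (m / 2) * (4 * (A * B) ^ 2 - m) := by
          rw [offDiag_sum_mul s, hs_sum, hmdef]; ring
  have hABpos : 0 < (A * B) ^ 2 := by positivity
  nlinarith [sq_nonneg (m - 2 * (A * B) ^ 2), hABpos,
    mul_pos hABpos hABpos]
end

section
/- If G is a finite simple graph on vertex set V with edge set E and m is a positive integer, then the number of (unlabeled) copies of the path P_{2m} on 2m vertices in G is at most (2|E|)^m / 2. -/
open SimpleGraph

private lemma rev_adj {n : ℕ} (i j : Fin n) :
    (pathGraph n).Adj i.rev j.rev ↔ (pathGraph n).Adj i j := by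
  simp only [pathGraph_adj, Fin.val_rev]
  have hi := i.isLt; have hj := j.isLt
  omega

noncomputable def vsd {V : Type*} {G : SimpleGraph V} {n : ℕ}
    (s : {H' : G.Subgraph // Nonempty (H'.coe ≃g pathGraph n)}) (b : Bool) (i : Fin n) : V :=
  (s.2.some.symm (if b then i.rev else i) : V)

lemma vsd_adj_iff {V : Type*} {G : SimpleGraph V} {n : ℕ}
    (s : {H' : G.Subgraph // Nonempty (H'.coe ≃g pathGraph n)}) (b : Bool) (x y : V) :
    s.1.Adj x y ↔ ∃ i j : Fin n, (pathGraph n).Adj i j ∧ x = vsd s b i ∧ y = vsd s b j := by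
  set e := s.2.some with he
  constructor
  · intro h
    refine ⟨(if b then (e ⟨x, h.fst_mem⟩).rev else (e ⟨x, h.fst_mem⟩)),
            (if b then (e ⟨y, h.snd_mem⟩).rev else (e ⟨y, h.snd_mem⟩)), ?_, ?_, ?_⟩
    · have hadj : (pathGraph n).Adj (e ⟨x, h.fst_mem⟩) (e ⟨y, h.snd_mem⟩) := by
        rw [e.map_adj_iff, SimpleGraph.Subgraph.coe_adj]; exact h
      cases b <;> simp [rev_adj, hadj]
    · cases b <;> simp [vsd, ← he, Fin.rev_rev]
    · cases b <;> simp [vsd, ← he, Fin.rev_rev]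
  · rintro ⟨i, j, hij, rfl, rfl⟩
    have hij' : (pathGraph n).Adj (if b then i.rev else i) (if b then j.rev else j) := by
      cases b <;> simp [rev_adj, hij]
    have := e.symm.map_adj_iff.mpr hij'
    rw [SimpleGraph.Subgraph.coe_adj] at this
    exact this

lemma vsd_range {V : Type*} {G : SimpleGraph V} {n : ℕ}
    (s : {H' : G.Subgraph // Nonempty (H'.coe ≃g pathGraph n)}) (b : Bool) :
    Set.range (vsd s b) = s.1.verts := by
  ext x
  constructor
  · rintro ⟨i, rfl⟩; exact (s.2.some.symm _).2
  · intro hx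
    refine ⟨if b then (s.2.some ⟨x, hx⟩).rev else (s.2.some ⟨x, hx⟩), ?_⟩
    cases b <;> simp [vsd, Fin.rev_rev]

lemma vsd_inj {V : Type*} {G : SimpleGraph V} {n : ℕ}
    (s : {H' : G.Subgraph // Nonempty (H'.coe ≃g pathGraph n)}) (b : Bool) :
    Function.Injective (vsd s b) := by
  intro i j h
  unfold vsd at h
  have := s.2.some.symm.injective (Subtype.val_injective h)
  cases b <;> simpa [Fin.rev_injective.eq_iff] using this

lemma vsd_true {V : Type*} {G : SimpleGraph V} {n : ℕ}
    (s : {H' : G.Subgraph // Nonempty (H'.coe ≃g pathGraph n)}) (i : Fin n) :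
    vsd s true i = vsd s false i.rev := rfl

/-- The number of unlabeled copies of the path `P_{2m}` in `G`, i.e. subgraphs of `G`
isomorphic to `pathGraph (2*m)`, is at most `(2|E|)^m / 2`. -/
theorem stmt_4 {V : Type*} [Fintype V] [DecidableEq V] (G : SimpleGraph V)
    [DecidableRel G.Adj] (m : ℕ) (hm : 0 < m) :
    (Nat.card {H' : G.Subgraph // Nonempty (H'.coe ≃g SimpleGraph.pathGraph (2 * m))} : ℝ) ≤
      (2 * G.edgeFinset.card : ℝ) ^ m / 2 := by
  classical
  have key : 2 * Nat.card {H' : G.Subgraph // Nonempty (H'.coe ≃g SimpleGraph.pathGraph (2 * m))}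
      ≤ (2 * G.edgeFinset.card) ^ m := by
    set T := {H' : G.Subgraph // Nonempty (H'.coe ≃g SimpleGraph.pathGraph (2 * m))} with hT
    have adjv : ∀ (s : T) (b : Bool) (i j : Fin (2 * m)),
        (pathGraph (2 * m)).Adj i j → G.Adj (vsd s b i) (vsd s b j) := by
      intro s b i j h
      exact s.1.adj_sub ((vsd_adj_iff s b _ _).mpr ⟨i, j, h, rfl, rfl⟩)
    let F : T × Bool → (Fin m → G.Dart) := fun p i =>
      ⟨(vsd p.1 p.2 ⟨2 * i, by have := i.isLt; omega⟩,
        vsd p.1 p.2 ⟨2 * i + 1, by have := i.isLt; omega⟩),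
       adjv _ _ _ _ (by rw [pathGraph_adj]; left; rfl)⟩
    have hF : Function.Injective F := by
      rintro ⟨s1, b1⟩ ⟨s2, b2⟩ hpq
      have hvs : vsd s1 b1 = vsd s2 b2 := by
        funext j
        have hj := j.isLt
        rcases Nat.even_or_odd j.val with ⟨c, hc⟩ | ⟨c, hc⟩
        · have hcm : c < m := by omega
          have h1 := congrArg (fun d => d.toProd.1) (congrFun hpq ⟨c, hcm⟩)
          have hj2 : j = (⟨2 * (⟨c, hcm⟩ : Fin m).val, by simpa using hcm⟩ : Fin (2 * m)) :=
            Fin.ext (by simp; omega)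
          rw [hj2]
          exact h1
        · have hcm : c < m := by omega
          have h1 := congrArg (fun d => d.toProd.2) (congrFun hpq ⟨c, hcm⟩)
          have hj2 : j = (⟨2 * (⟨c, hcm⟩ : Fin m).val + 1, by simp; omega⟩ : Fin (2 * m)) :=
            Fin.ext (by simp; omega)
          rw [hj2]
          exact h1
      have hs : s1 = s2 := by
        apply Subtype.ext
        apply SimpleGraph.Subgraph.ext
        · rw [← vsd_range s1 b1, ← vsd_range s2 b2, hvs]
        · funext x y
          apply propext
          rw [vsd_adj_iff s1 b1 x y, vsd_adj_iff s2 b2 x y, hvs]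
      subst hs
      have hb : b1 = b2 := by
        by_contra hne
        have hvs' : vsd s1 false = vsd s1 true := by
          cases b1 <;> cases b2 <;> simp_all
        have hz : (⟨0, by omega⟩ : Fin (2 * m)) = (⟨0, by omega⟩ : Fin (2 * m)).rev := by
          apply vsd_inj s1 false
          rw [← vsd_true, ← hvs']
        have := congrArg Fin.val hz
        simp [Fin.val_rev] at this
        omega
      rw [hb]
    have h1 : Nat.card (T × Bool) ≤ Nat.card (Fin m → G.Dart) :=
      Nat.card_le_card_of_injective F hF
    have h2 : Nat.card (Fin m → G.Dart) = (2 * G.edgeFinset.card) ^ m := by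
      rw [Nat.card_eq_fintype_card, Fintype.card_fun, Fintype.card_fin,
        G.dart_card_eq_twice_card_edges]
    have h3 : Nat.card Bool = 2 := by simp [Nat.card_eq_fintype_card]
    rw [Nat.card_prod, h2, h3] at h1
    omega
  rw [le_div_iff₀ (by norm_num : (0:ℝ) < 2), mul_comm]
  exact_mod_cast key
end

section
/- Let C > 0 and let G = (V,E) be an n-vertex simple graph with no copy of K_{3,3} such that every subgraph H of G satisfies |E(H)| ≤ C·|V(H)|. For ε > 0, let Ṽ = {v ∈ V : deg(v) ≥ εn}. Then the sum over unordered pairs {u,v} ⊆ Ṽ of the codegree deg(u,v) = |N(u) ∩ N(v)| is at most n + 4·(C/ε)⁴. -/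
open Finset

lemma k33_aux {V : Type*} [Fintype V] [DecidableEq V] (G : SimpleGraph V) [DecidableRel G.Adj]
    (hK33 : ¬ ∃ f : completeBipartiteGraph (Fin 3) (Fin 3) →g G, Function.Injective f)
    (T : Finset V) (hT : T.card = 3) :
    (Finset.univ.filter fun w => T ⊆ G.neighborFinset w).card ≤ 2 := by
  by_contra h
  push_neg at h
  obtain ⟨W, hWsub, hW⟩ := Finset.exists_subset_card_eq h
  obtain ⟨u1, u2, u3, hu12, hu13, hu23, rfl⟩ := Finset.card_eq_three.mp hT
  obtain ⟨w1, w2, w3, hw12, hw13, hw23, rfl⟩ := Finset.card_eq_three.mp hW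
  have hadj : ∀ w ∈ ({w1, w2, w3} : Finset V), ∀ u ∈ ({u1, u2, u3} : Finset V), G.Adj u w := by
    intro w hw u hu
    have := hWsub hw
    simp only [Finset.mem_filter] at this
    have := this.2 hu
    rw [SimpleGraph.mem_neighborFinset] at this
    exact this.symm
  have hadj' : ∀ i j : Fin 3, G.Adj (![u1,u2,u3] i) (![w1,w2,w3] j) := by
    intro i j
    fin_cases i <;> fin_cases j <;>
      · apply hadj <;> simp
  have hne : ∀ i j : Fin 3, ![u1,u2,u3] i ≠ ![w1,w2,w3] j := fun i j => (hadj' i j).ne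
  have hui : Function.Injective ![u1,u2,u3] := by
    intro i j hij; fin_cases i <;> fin_cases j <;> simp_all
  have hwi : Function.Injective ![w1,w2,w3] := by
    intro i j hij; fin_cases i <;> fin_cases j <;> simp_all
  refine hK33 ⟨⟨Sum.elim ![u1,u2,u3] ![w1,w2,w3], ?_⟩, ?_⟩
  · intro x y hxy
    rcases x with i | i <;> rcases y with j | j
    · simp at hxy
    · exact hadj' i j
    · exact (hadj' j i).symm
    · simp at hxy
  · intro x y hxy
    rcases x with i | i <;> rcases y with j | j
    · exact congrArg Sum.inl (hui hxy)
    · exact absurd hxy (hne i j)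
    · exact absurd hxy.symm (hne j i)
    · exact congrArg Sum.inr (hwi hxy)

/-- The sum over unordered pairs `{u,v} ⊆ Ṽ` of codegrees is written as half the sum
over ordered pairs of distinct vertices of `Ṽ`. -/
theorem stmt_7 {V : Type*} [Fintype V] [DecidableEq V] (G : SimpleGraph V)
    [DecidableRel G.Adj] (C ε : ℝ) (hC : 0 < C) (hε : 0 < ε)
    (hK33 : ¬ ∃ f : completeBipartiteGraph (Fin 3) (Fin 3) →g G, Function.Injective f)
    (hsparse : ∀ H : G.Subgraph, (H.edgeSet.ncard : ℝ) ≤ C * H.verts.ncard) :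
    (∑ p ∈ (Finset.univ.filter fun v => ε * Fintype.card V ≤ G.degree v).offDiag,
        ((G.neighborFinset p.1 ∩ G.neighborFinset p.2).card : ℝ)) / 2 ≤
      Fintype.card V + 4 * (C / ε) ^ 4 := by
  classical
  set n := Fintype.card V with hn
  set S := Finset.univ.filter fun v => ε * n ≤ G.degree v with hS
  set m := S.card with hm
  -- Step A : (m : ℝ) * ε ≤ 2 * C
  have hedge : (G.edgeFinset.card : ℝ) ≤ C * n := by
    have h := hsparse ⊤
    rwa [SimpleGraph.Subgraph.edgeSet_top, SimpleGraph.Subgraph.verts_top, Set.ncard_univ,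
      Nat.card_eq_fintype_card, ← SimpleGraph.coe_edgeFinset, Set.ncard_coe_finset] at h
  have hmA : (m : ℝ) * ε ≤ 2 * C := by
    rcases Nat.eq_zero_or_pos n with h0 | h0
    · have : S = ∅ := by
        have := Fintype.card_eq_zero_iff.mp h0
        exact Finset.eq_empty_of_forall_notMem fun x _ => this.elim' x
      rw [hm, this]
      simpa using by positivity
    · have h1 : (m : ℝ) * (ε * n) ≤ ∑ v ∈ S, (G.degree v : ℝ) := by
        have := Finset.card_nsmul_le_sum S (fun v => (G.degree v : ℝ)) (ε * n)
          (fun v hv => (Finset.mem_filter.mp hv).2)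
        simpa [nsmul_eq_mul] using this
      have h2 : ∑ v ∈ S, (G.degree v : ℝ) ≤ ∑ v : V, (G.degree v : ℝ) :=
        Finset.sum_le_sum_of_subset_of_nonneg (Finset.subset_univ S)
          (fun v _ _ => by positivity)
      have h3 : ∑ v : V, (G.degree v : ℝ) = 2 * G.edgeFinset.card := by
        exact_mod_cast congrArg (Nat.cast : ℕ → ℝ) (G.sum_degrees_eq_twice_card_edges)
      have h4 : (m : ℝ) * (ε * n) ≤ 2 * C * n := by
        calc (m : ℝ) * (ε * n) ≤ ∑ v ∈ S, (G.degree v : ℝ) := h1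
          _ ≤ ∑ v : V, (G.degree v : ℝ) := h2
          _ = 2 * G.edgeFinset.card := h3
          _ ≤ 2 * (C * n) := by linarith
          _ = 2 * C * n := by ring
      have hn0 : (0 : ℝ) < n := by exact_mod_cast h0
      have := (mul_le_mul_iff_of_pos_right hn0).mp (by linarith [h4] : (m : ℝ) * ε * n ≤ 2 * C * n)
      linarith
  -- local degree function
  set d : V → ℕ := fun w => (S ∩ G.neighborFinset w).card with hd
  -- Step B : the ordered-pair sum equals ∑ w, d w * (d w - 1)
  have hB : ∑ p ∈ S.offDiag, (G.neighborFinset p.1 ∩ G.neighborFinset p.2).card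
      = ∑ w : V, d w * (d w - 1) := by
    have h1 : ∀ p : V × V, (G.neighborFinset p.1 ∩ G.neighborFinset p.2).card
        = ∑ w : V, if p.1 ∈ G.neighborFinset w ∧ p.2 ∈ G.neighborFinset w then 1 else 0 := by
      intro p
      rw [← Finset.card_filter]
      congr 1
      ext w
      simp [SimpleGraph.mem_neighborFinset, SimpleGraph.adj_comm]
    calc ∑ p ∈ S.offDiag, (G.neighborFinset p.1 ∩ G.neighborFinset p.2).card
        = ∑ p ∈ S.offDiag, ∑ w : V,
            if p.1 ∈ G.neighborFinset w ∧ p.2 ∈ G.neighborFinset w then 1 else 0 :=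
          Finset.sum_congr rfl fun p _ => h1 p
      _ = ∑ w : V, ∑ p ∈ S.offDiag,
            if p.1 ∈ G.neighborFinset w ∧ p.2 ∈ G.neighborFinset w then 1 else 0 :=
          Finset.sum_comm
      _ = ∑ w : V, d w * (d w - 1) := by
          refine Finset.sum_congr rfl fun w _ => ?_
          rw [← Finset.card_filter]
          have : (S.offDiag.filter fun p => p.1 ∈ G.neighborFinset w ∧ p.2 ∈ G.neighborFinset w)
              = (S ∩ G.neighborFinset w).offDiag := by
            ext p
            simp only [Finset.mem_filter, Finset.mem_offDiag, Finset.mem_inter]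
            tauto
          rw [this, Finset.offDiag_card, Nat.mul_sub_one]
  -- Step C : triple counting via K33-freeness
  have hC3 : ∑ w : V, (d w).choose 3 ≤ 2 * m.choose 3 := by
    calc ∑ w : V, (d w).choose 3
        = ∑ w : V, ((S ∩ G.neighborFinset w).powersetCard 3).card := by
          simp [hd, Finset.card_powersetCard]
      _ = ∑ w : V, ((S.powersetCard 3).filter fun T => T ⊆ G.neighborFinset w).card := by
          refine Finset.sum_congr rfl fun w _ => ?_
          congr 1
          ext T
          simp only [Finset.mem_powersetCard, Finset.mem_filter, Finset.subset_inter_iff]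
          tauto
      _ = ∑ w : V, ∑ T ∈ S.powersetCard 3, if T ⊆ G.neighborFinset w then 1 else 0 := by
          refine Finset.sum_congr rfl fun w _ => ?_
          rw [Finset.card_filter]
      _ = ∑ T ∈ S.powersetCard 3, ∑ w : V, if T ⊆ G.neighborFinset w then 1 else 0 :=
          Finset.sum_comm
      _ = ∑ T ∈ S.powersetCard 3, (Finset.univ.filter fun w => T ⊆ G.neighborFinset w).card := by
          refine Finset.sum_congr rfl fun T _ => ?_
          rw [Finset.card_filter]
      _ ≤ ∑ T ∈ S.powersetCard 3, 2 :=
          Finset.sum_le_sum fun T hT => k33_aux G hK33 T (Finset.mem_powersetCard.mp hT).2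
      _ = 2 * m.choose 3 := by
          simp [Finset.card_powersetCard, mul_comm, hm]
  -- pointwise choose bound
  have hpt : ∀ k : ℕ, k * (k - 1) ≤ 2 + 6 * k.choose 3 := by
    intro k
    rcases le_or_gt k 2 with h | h
    · interval_cases k <;> simp
    · have h2 : k.choose 2 * 2 = k * (k - 1) := by
        simpa [Nat.choose_one_right] using Nat.choose_succ_right_eq k 1
      have h3 : k.choose 3 * 3 = k.choose 2 * (k - 2) := Nat.choose_succ_right_eq k 2
      have h4 : k.choose 2 ≤ k.choose 2 * (k - 2) := Nat.le_mul_of_pos_right _ (by omega)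
      omega
  have hchoose3 : 6 * m.choose 3 ≤ m * (m - 1) * (m - 2) := by
    have h2 : m.choose 2 * 2 = m * (m - 1) := by
      simpa [Nat.choose_one_right] using Nat.choose_succ_right_eq m 1
    have h3 : m.choose 3 * 3 = m.choose 2 * (m - 2) := Nat.choose_succ_right_eq m 2
    nlinarith [Nat.zero_le (m.choose 3)]
  -- natural-number total bound
  have htotal : ∑ p ∈ S.offDiag, (G.neighborFinset p.1 ∩ G.neighborFinset p.2).card
      ≤ 2 * n + 2 * (m * (m - 1) * (m - 2)) := by
    calc ∑ p ∈ S.offDiag, (G.neighborFinset p.1 ∩ G.neighborFinset p.2).card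
        = ∑ w : V, d w * (d w - 1) := hB
      _ ≤ ∑ w : V, (2 + 6 * (d w).choose 3) := Finset.sum_le_sum fun w _ => hpt (d w)
      _ = 2 * n + 6 * ∑ w : V, (d w).choose 3 := by
          rw [Finset.sum_add_distrib, ← Finset.mul_sum]
          simp [hn, Finset.card_univ, mul_comm]
      _ ≤ 2 * n + 6 * (2 * m.choose 3) := by
          have := Nat.mul_le_mul_left 6 hC3
          omega
      _ ≤ 2 * n + 2 * (m * (m - 1) * (m - 2)) := by
          have := Nat.mul_le_mul_left 2 hchoose3
          omega
  -- the quartic bound on m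
  have hquartic : 4 * (m * (m - 1) * (m - 2)) ≤ m ^ 4 := by
    match m with
    | 0 => simp
    | 1 => simp
    | 2 => simp
    | (k+3) =>
      have h1 : k + 3 - 1 = k + 2 := by omega
      have h2 : k + 3 - 2 = k + 1 := by omega
      rw [h1, h2]
      nlinarith [Nat.zero_le k, sq_nonneg k]
  -- assemble over ℝ
  have hcast : (∑ p ∈ S.offDiag, ((G.neighborFinset p.1 ∩ G.neighborFinset p.2).card : ℝ))
      = ((∑ p ∈ S.offDiag, (G.neighborFinset p.1 ∩ G.neighborFinset p.2).card : ℕ) : ℝ) := by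
    push_cast
    rfl
  rw [hcast]
  have hle1 : ((∑ p ∈ S.offDiag, (G.neighborFinset p.1 ∩ G.neighborFinset p.2).card : ℕ) : ℝ)
      ≤ 2 * n + 2 * (m * (m - 1) * (m - 2) : ℕ) := by
    exact_mod_cast htotal
  have hP : ((m * (m - 1) * (m - 2) : ℕ) : ℝ) ≤ 4 * (C / ε) ^ 4 := by
    have hm4 : ((m * (m - 1) * (m - 2) : ℕ) : ℝ) ≤ (m : ℝ) ^ 4 / 4 := by
      have h4 : ((4 * (m * (m - 1) * (m - 2)) : ℕ) : ℝ) ≤ ((m ^ 4 : ℕ) : ℝ) := by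
        exact_mod_cast hquartic
      push_cast at h4
      rw [Nat.cast_mul, Nat.cast_mul]
      linarith
    have hmle : (m : ℝ) ≤ 2 * (C / ε) := by
      rw [show (2 : ℝ) * (C / ε) = 2 * C / ε by ring, le_div_iff₀ hε]
      exact hmA
    have hm0 : (0 : ℝ) ≤ (m : ℝ) := Nat.cast_nonneg m
    have hpow : (m : ℝ) ^ 4 ≤ (2 * (C / ε)) ^ 4 := by
      exact pow_le_pow_left₀ hm0 hmle 4
    have : (2 * (C / ε)) ^ 4 = 16 * (C / ε) ^ 4 := by ring
    calc ((m * (m - 1) * (m - 2) : ℕ) : ℝ) ≤ (m : ℝ) ^ 4 / 4 := hm4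
      _ ≤ (2 * (C / ε)) ^ 4 / 4 := by linarith
      _ = 4 * (C / ε) ^ 4 := by rw [this]; ring
  linarith
end

section
/- Let H be a graph on m edges with no isolated vertices, let k be a positive integer with k·δ(H) ≥ 2 where δ(H) is the minimum degree of H, and let G = (V,E) be any simple graph. Then the sum, over all copies H' of H with V(H') ⊆ V (copies in the complete graph on V), of the product over edges xy of H' of deg_G(x,y)^k, is at most (2|E|)^{km} / |Aut H|. -/
open Finset

private lemma prod_edge_lift {W : Type*} [Fintype W] [DecidableEq W] (H : SimpleGraph W)
    [DecidableRel H.Adj] (b : W → ℝ) :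
    ∏ e ∈ H.edgeFinset, Sym2.lift ⟨fun x y => b x * b y, fun x y => mul_comm _ _⟩ e
      = ∏ w, b w ^ H.degree w := by
  have h1 : ∏ d : H.Dart, b d.toProd.1 = ∏ w, b w ^ H.degree w := by
    rw [← Finset.prod_fiberwise_of_maps_to (t := (univ : Finset W))
      (g := fun d : H.Dart => d.toProd.1) (fun d _ => mem_univ _) (fun d => b d.toProd.1)]
    refine Finset.prod_congr rfl fun w _ => ?_
    rw [Finset.prod_congr rfl (fun d hd => show b d.toProd.1 = b w by
      rw [(Finset.mem_filter.mp hd).2]), Finset.prod_const,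
      SimpleGraph.dart_fst_fiber_card_eq_degree]
  have h2 : ∏ d : H.Dart, b d.toProd.1
      = ∏ e ∈ H.edgeFinset, Sym2.lift ⟨fun x y => b x * b y, fun x y => mul_comm _ _⟩ e := by
    rw [← Finset.prod_fiberwise_of_maps_to (t := H.edgeFinset)
      (g := fun d : H.Dart => d.edge)
      (fun d _ => by rw [SimpleGraph.mem_edgeFinset]; exact d.edge_mem) (fun d => b d.toProd.1)]
    refine Finset.prod_congr rfl fun e he => ?_
    rw [SimpleGraph.mem_edgeFinset] at he
    revert he
    refine Sym2.ind (fun x y he => ?_) e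
    rw [SimpleGraph.mem_edgeSet] at he
    have hfib : (univ.filter fun d' : H.Dart => d'.edge = s(x, y)) =
        {(⟨(x, y), he⟩ : H.Dart), (⟨(x, y), he⟩ : H.Dart).symm} := by
      convert (⟨(x, y), he⟩ : H.Dart).edge_fiber using 2
      exact Iff.rfl
    rw [hfib, Finset.prod_insert (by
      simp only [Finset.mem_singleton]
      exact fun h => (⟨(x, y), he⟩ : H.Dart).symm_ne h.symm), Finset.prod_singleton]
    simp [SimpleGraph.Dart.symm]
  rw [← h1, h2]

private lemma sum_rpow_le {ι : Type*} (s : Finset ι) (a : ι → ℝ) (ha : ∀ i ∈ s, 0 ≤ a i)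
    {p : ℝ} (hp : 1 ≤ p) : ∑ i ∈ s, a i ^ p ≤ (∑ i ∈ s, a i) ^ p := by
  have hS : 0 ≤ ∑ i ∈ s, a i := Finset.sum_nonneg ha
  have key : ∀ i ∈ s, a i ^ p ≤ a i * (∑ i ∈ s, a i) ^ (p - 1) := by
    intro i hi
    have h1 : a i ^ p = a i ^ (1 + (p - 1)) := by ring_nf
    rw [h1, Real.rpow_add' (ha i hi) (by linarith), Real.rpow_one]
    exact mul_le_mul_of_nonneg_left
      (Real.rpow_le_rpow (ha i hi) (Finset.single_le_sum ha hi) (by linarith)) (ha i hi)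
  calc ∑ i ∈ s, a i ^ p ≤ ∑ i ∈ s, a i * (∑ i ∈ s, a i) ^ (p - 1) := Finset.sum_le_sum key
    _ = (∑ i ∈ s, a i) * (∑ i ∈ s, a i) ^ (p - 1) := by rw [← Finset.sum_mul]
    _ = (∑ i ∈ s, a i) ^ (1 + (p - 1)) := by
        rw [Real.rpow_add' hS (by linarith), Real.rpow_one]
    _ = (∑ i ∈ s, a i) ^ p := by ring_nf


private lemma card_emb {W V : Type*} [Fintype W] [Fintype V]
    (H : SimpleGraph W) (H' : (⊤ : SimpleGraph V).Subgraph) (φ : H'.coe ≃g H) :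
    Nat.card {f : W → V // Function.Injective f ∧ Set.range f = H'.verts ∧
      ∀ a b, H.Adj a b ↔ H'.Adj (f a) (f b)} = Nat.card (H ≃g H) := by
  have h2 : Nat.card (H ≃g H'.coe) = Nat.card (H ≃g H) := by
    refine Nat.card_congr ⟨fun ψ => ψ.trans φ, fun χ => χ.trans φ.symm, fun ψ => ?_, fun χ => ?_⟩
    · exact RelIso.ext fun x => φ.symm_apply_apply _
    · exact RelIso.ext fun x => φ.apply_symm_apply _
  rw [← h2]
  let mk : (H ≃g H'.coe) → {f : W → V // Function.Injective f ∧ Set.range f = H'.verts ∧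
      ∀ a b, H.Adj a b ↔ H'.Adj (f a) (f b)} := fun ψ =>
    ⟨fun w => ((ψ w : H'.verts) : V),
     Subtype.val_injective.comp ψ.toEquiv.injective,
     by
       ext v
       constructor
       · rintro ⟨w, rfl⟩; exact (ψ w).2
       · intro hv; exact ⟨ψ.symm ⟨v, hv⟩, by simp⟩,
     fun a b => by
       rw [← ψ.map_rel_iff]
       exact Iff.rfl⟩
  refine (Nat.card_eq_of_bijective mk ⟨?_, ?_⟩).symm
  · intro ψ χ h
    have h0 : ∀ w, ((ψ w : H'.verts) : V) = ((χ w : H'.verts) : V) :=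
      fun w => congrFun (congrArg Subtype.val h) w
    exact RelIso.ext fun w => Subtype.ext (h0 w)
  · rintro ⟨f, inj, hrange, hadj⟩
    have hmem : ∀ w, f w ∈ H'.verts := fun w => hrange ▸ Set.mem_range_self w
    have hbij : Function.Bijective (fun w => (⟨f w, hmem w⟩ : H'.verts)) := by
      constructor
      · intro a b h
        exact inj (congrArg Subtype.val h)
      · rintro ⟨v, hv⟩
        rw [← hrange] at hv
        obtain ⟨w, rfl⟩ := hv
        exact ⟨w, rfl⟩
    refine ⟨⟨Equiv.ofBijective _ hbij, ?_⟩, ?_⟩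
    · intro a b
      simp only [Equiv.ofBijective_apply, SimpleGraph.Subgraph.coe_adj]
      exact (hadj a b).symm
    · exact Subtype.ext (funext fun w => rfl)


private lemma main_aux {W V : Type*} [Fintype W] [Fintype V] [DecidableEq V]
    (H : SimpleGraph W) [DecidableRel H.Adj] (G : SimpleGraph V) [DecidableRel G.Adj]
    (m k : ℕ) (hm : H.edgeFinset.card = m) (hk : 0 < k)
    (hiso : ∀ w, 0 < H.degree w) (hδ : 2 ≤ k * H.minDegree)
    (c : Sym2 V → ℝ)
    (hcxy : ∀ x y, c s(x, y) = ((G.neighborFinset x ∩ G.neighborFinset y).card : ℝ) ^ k) :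
    ∑ᶠ H' ∈ {H' : (⊤ : SimpleGraph V).Subgraph | Nonempty (H'.coe ≃g H)},
        ∏ᶠ e ∈ H'.edgeSet, c e ≤
      (2 * G.edgeFinset.card : ℝ) ^ (k * m) / Nat.card (H ≃g H) := by
  classical
  -- basic facts
  have hc0 : ∀ e, 0 ≤ c e := by
    intro e
    induction e using Sym2.ind with
    | _ x y => rw [hcxy]; positivity
  haveI : Finite (⊤ : SimpleGraph V).Subgraph :=
    Finite.of_injective (fun H' => (H'.verts, H'.Adj))
      (fun a b h => SimpleGraph.Subgraph.ext (congrArg Prod.fst h) (congrArg Prod.snd h))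
  haveI : Finite (H ≃g H) :=
    Finite.of_injective (fun ψ => (ψ : W → W)) DFunLike.coe_injective
  haveI : Nonempty (H ≃g H) := ⟨RelIso.refl _⟩
  have hNpos : 0 < Nat.card (H ≃g H) := Nat.card_pos
  have hWne : Nonempty W := by
    by_contra hW
    haveI := not_nonempty_iff.mp hW
    have h0 : H.minDegree = 0 := by simp [SimpleGraph.minDegree]
    rw [h0, mul_zero] at hδ
    omega
  have hm1 : 1 ≤ m := by
    obtain ⟨w0⟩ := hWne
    have hd := hiso w0
    rw [← SimpleGraph.card_neighborFinset_eq_degree] at hd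
    obtain ⟨v, hv⟩ := Finset.card_pos.mp hd
    have hne : H.edgeFinset.Nonempty :=
      ⟨s(w0, v), by
        rw [SimpleGraph.mem_edgeFinset, SimpleGraph.mem_edgeSet]
        exact (SimpleGraph.mem_neighborFinset _ _ _).mp hv⟩
    rw [← hm]
    exact Finset.card_pos.mpr hne
  set d : V → ℝ := fun v => (G.degree v : ℝ) with hd
  have hd0 : ∀ v, 0 ≤ d v := fun v => Nat.cast_nonneg _
  set ε : W → ℝ := fun w => (k : ℝ) / 2 * (H.degree w : ℝ) with hε
  have hε1 : ∀ w, 1 ≤ ε w := by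
    intro w
    have h1 : 2 ≤ k * H.degree w :=
      le_trans hδ (Nat.mul_le_mul_left k (H.minDegree_le_degree w))
    have h2 : (2 : ℝ) ≤ (k : ℝ) * (H.degree w : ℝ) := by exact_mod_cast h1
    rw [hε]
    dsimp only
    linarith
  set P : (W → V) → ℝ := fun f => ∏ e ∈ H.edgeFinset, c (e.map f) with hP
  have hP0 : ∀ f, 0 ≤ P f := fun f => Finset.prod_nonneg fun e _ => hc0 _
  set S : Set (⊤ : SimpleGraph V).Subgraph := {H' | Nonempty (H'.coe ≃g H)} with hS
  have hSfin : S.Finite := Set.toFinite _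
  set pred : (⊤ : SimpleGraph V).Subgraph → (W → V) → Prop := fun H' f =>
    Function.Injective f ∧ Set.range f = H'.verts ∧
      ∀ a b, H.Adj a b ↔ H'.Adj (f a) (f b) with hpred
  set AF : (⊤ : SimpleGraph V).Subgraph → Finset (W → V) :=
    fun H' => univ.filter (pred H') with hAF
  -- counting
  have hAFcard : ∀ H' ∈ S, (AF H').card = Nat.card (H ≃g H) := by
    intro H' hH'
    obtain ⟨φ⟩ := hH'
    rw [← card_emb H H' φ, Nat.card_eq_fintype_card, Fintype.card_subtype]
  -- value transfer
  have hFP : ∀ (H' : (⊤ : SimpleGraph V).Subgraph) f, pred H' f →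
      (∏ᶠ e ∈ H'.edgeSet, c e) = P f := by
    rintro H' f ⟨inj, hrange, hadj⟩
    rw [finprod_mem_eq_finite_toFinset_prod _ (Set.toFinite H'.edgeSet), hP]
    refine (Finset.prod_bij (fun e _ => Sym2.map f e) ?_ ?_ ?_ ?_).symm
    · intro e he
      induction e using Sym2.ind with
      | _ a b =>
        rw [SimpleGraph.mem_edgeFinset, SimpleGraph.mem_edgeSet] at he
        rw [Set.Finite.mem_toFinset]
        simpa using (hadj a b).mp he
    · intro e1 h1 e2 h2 hmap
      exact Sym2.map.injective inj hmap
    · intro e he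
      rw [Set.Finite.mem_toFinset] at he
      induction e using Sym2.ind with
      | _ x y =>
        rw [SimpleGraph.Subgraph.mem_edgeSet] at he
        have hx : x ∈ Set.range f := by rw [hrange]; exact he.fst_mem
        have hy : y ∈ Set.range f := by rw [hrange]; exact he.snd_mem
        obtain ⟨a, rfl⟩ := hx
        obtain ⟨b, rfl⟩ := hy
        refine ⟨s(a, b), ?_, by simp⟩
        rw [SimpleGraph.mem_edgeFinset, SimpleGraph.mem_edgeSet]
        exact (hadj a b).mpr he
    · intro e he
      rfl
  -- disjointness
  have hdisj : (↑hSfin.toFinset : Set (⊤ : SimpleGraph V).Subgraph).PairwiseDisjoint AF := by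
    intro H1 h1 H2 h2 hne
    refine Finset.disjoint_left.mpr fun f hf1 hf2 => hne ?_
    obtain ⟨inj1, hr1, ha1⟩ := (Finset.mem_filter.mp hf1).2
    obtain ⟨inj2, hr2, ha2⟩ := (Finset.mem_filter.mp hf2).2
    have key : ∀ (A B : (⊤ : SimpleGraph V).Subgraph),
        Set.range f = A.verts → (∀ a b, H.Adj a b ↔ A.Adj (f a) (f b)) →
        (∀ a b, H.Adj a b ↔ B.Adj (f a) (f b)) → ∀ x y, A.Adj x y → B.Adj x y := by
      intro A B hrA haA haB x y hxy
      have hx : x ∈ Set.range f := by rw [hrA]; exact hxy.fst_mem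
      have hy : y ∈ Set.range f := by rw [hrA]; exact hxy.snd_mem
      obtain ⟨a, rfl⟩ := hx
      obtain ⟨b, rfl⟩ := hy
      exact (haB a b).mp ((haA a b).mpr hxy)
    refine SimpleGraph.Subgraph.ext (by rw [← hr1, ← hr2]) ?_
    funext x y
    exact propext ⟨key H1 H2 hr1 ha1 ha2 x y, key H2 H1 hr2 ha2 ha1 x y⟩
  -- pointwise bound P f ≤ ∏ w, d (f w) ^ ε w
  have hPQ : ∀ f : W → V, P f ≤ ∏ w, d (f w) ^ ε w := by
    intro f
    have hk2 : (0 : ℝ) < (k : ℝ) / 2 + (k : ℝ) / 2 := by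
      have : (0 : ℝ) < (k : ℝ) := by exact_mod_cast hk
      linarith
    have step1 : P f ≤ ∏ e ∈ H.edgeFinset,
        Sym2.lift ⟨fun x y => d (f x) ^ ((k : ℝ) / 2) * d (f y) ^ ((k : ℝ) / 2),
          fun x y => mul_comm _ _⟩ e := by
      rw [hP]
      refine Finset.prod_le_prod (fun e _ => hc0 _) fun e he => ?_
      induction e using Sym2.ind with
      | _ x y =>
        rw [Sym2.map_pair_eq, hcxy, Sym2.lift_mk]
        set n : ℕ := (G.neighborFinset (f x) ∩ G.neighborFinset (f y)).card with hn
        have hnn : (0 : ℝ) ≤ (n : ℝ) := Nat.cast_nonneg _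
        have hnx' : n ≤ G.degree (f x) := by
          rw [← SimpleGraph.card_neighborFinset_eq_degree]
          exact Finset.card_le_card Finset.inter_subset_left
        have hny' : n ≤ G.degree (f y) := by
          rw [← SimpleGraph.card_neighborFinset_eq_degree]
          exact Finset.card_le_card Finset.inter_subset_right
        have hnx : (n : ℝ) ≤ d (f x) := by show (n:ℝ) ≤ ((G.degree (f x) : ℕ) : ℝ); exact_mod_cast hnx'
        have hny : (n : ℝ) ≤ d (f y) := by show (n:ℝ) ≤ ((G.degree (f y) : ℕ) : ℝ); exact_mod_cast hny'
        have h2 : ((n : ℝ)) ^ k = (n : ℝ) ^ ((k : ℝ) / 2) * (n : ℝ) ^ ((k : ℝ) / 2) := by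
          rw [← Real.rpow_add' hnn (ne_of_gt hk2), ← Real.rpow_natCast (n : ℝ) k]
          norm_num
        rw [h2]
        exact mul_le_mul
          (Real.rpow_le_rpow hnn hnx (by linarith))
          (Real.rpow_le_rpow hnn hny (by linarith))
          (Real.rpow_nonneg hnn _)
          (Real.rpow_nonneg (hd0 _) _)
    have step2 : (∏ e ∈ H.edgeFinset,
        Sym2.lift ⟨fun x y => d (f x) ^ ((k : ℝ) / 2) * d (f y) ^ ((k : ℝ) / 2),
          fun x y => mul_comm _ _⟩ e) = ∏ w, d (f w) ^ ε w := by
      rw [prod_edge_lift H (fun w => d (f w) ^ ((k : ℝ) / 2))]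
      refine Finset.prod_congr rfl fun w _ => ?_
      rw [← Real.rpow_natCast (d (f w) ^ ((k : ℝ) / 2)) (H.degree w),
        ← Real.rpow_mul (hd0 _)]
    rw [← step2]
    exact step1
  -- handshake for G
  have hhandG : (∑ v, d v) = (2 * G.edgeFinset.card : ℝ) := by
    rw [hd]
    rw [← Nat.cast_sum]
    rw [SimpleGraph.sum_degrees_eq_twice_card_edges]
    push_cast
    ring
  have hsumε : ∑ w, ε w = ((k * m : ℕ) : ℝ) := by
    have h := H.sum_degrees_eq_twice_card_edges
    rw [hm] at h
    rw [hε]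
    dsimp only
    rw [← Finset.mul_sum, ← Nat.cast_sum, h]
    push_cast
    ring
  -- conclusion
  rw [le_div_iff₀ (by exact_mod_cast hNpos)]
  rw [finsum_mem_eq_finite_toFinset_sum _ hSfin]
  calc (∑ H' ∈ hSfin.toFinset, ∏ᶠ e ∈ H'.edgeSet, c e) * (Nat.card (H ≃g H) : ℝ)
      = ∑ H' ∈ hSfin.toFinset, ∑ f ∈ AF H', P f := by
        rw [Finset.sum_mul]
        refine Finset.sum_congr rfl fun H' hH' => ?_
        have hmem : H' ∈ S := (Set.Finite.mem_toFinset hSfin).mp hH'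
        rw [Finset.sum_congr rfl fun f hf =>
          (hFP H' f ((Finset.mem_filter.mp hf).2)).symm]
        rw [Finset.sum_const, hAFcard H' hmem, nsmul_eq_mul, mul_comm]
    _ = ∑ f ∈ hSfin.toFinset.biUnion AF, P f := (Finset.sum_biUnion hdisj).symm
    _ ≤ ∑ f : W → V, P f :=
        Finset.sum_le_sum_of_subset_of_nonneg (Finset.subset_univ _) fun f _ _ => hP0 f
    _ ≤ ∑ f : W → V, ∏ w, d (f w) ^ ε w := Finset.sum_le_sum fun f _ => hPQ f
    _ = ∏ w, ∑ v, d v ^ ε w := by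
        rw [Finset.prod_univ_sum]
        rw [Fintype.piFinset_univ]
    _ ≤ ∏ w, (2 * G.edgeFinset.card : ℝ) ^ ε w := by
        refine Finset.prod_le_prod (fun w _ => Finset.sum_nonneg fun v _ =>
          Real.rpow_nonneg (hd0 v) _) fun w _ => ?_
        have := sum_rpow_le univ d (fun v _ => hd0 v) (hε1 w)
        rwa [hhandG] at this
    _ ≤ (2 * G.edgeFinset.card : ℝ) ^ (k * m) := by
        rcases eq_or_lt_of_le (by positivity : (0:ℝ) ≤ (2 * G.edgeFinset.card : ℝ)) with hE | hE
        · obtain ⟨w0⟩ := hWne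
          rw [Finset.prod_eq_zero (Finset.mem_univ w0)
            (by rw [← hE, Real.zero_rpow (by linarith [hε1 w0])])]
          rw [← hE, zero_pow (by positivity)]
        · rw [← Real.rpow_sum_of_pos hE, hsumε, Real.rpow_natCast]



/-- Copies of `H` in the complete graph on `V` are the subgraphs of `⊤ : SimpleGraph V`
isomorphic to `H`; `Aut H` is the group of graph automorphisms of `H`.  The codegree
function is extended to `Sym2 V` via `Sym2.lift`. -/
theorem stmt_8 {W V : Type*} [Fintype W] [Fintype V] [DecidableEq V]
    (H : SimpleGraph W) [DecidableRel H.Adj] (G : SimpleGraph V) [DecidableRel G.Adj]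
    (m k : ℕ) (hm : H.edgeFinset.card = m) (hk : 0 < k)
    (hiso : ∀ w, 0 < H.degree w) (hδ : 2 ≤ k * H.minDegree) :
    ∑ᶠ H' ∈ {H' : (⊤ : SimpleGraph V).Subgraph | Nonempty (H'.coe ≃g H)},
        ∏ᶠ e ∈ H'.edgeSet,
          Sym2.lift ⟨fun x y => ((G.neighborFinset x ∩ G.neighborFinset y).card : ℝ) ^ k,
            fun x y => by simp [Finset.inter_comm]⟩ e ≤
      (2 * G.edgeFinset.card : ℝ) ^ (k * m) / Nat.card (H ≃g H) := by
  exact main_aux H G m k hm hk hiso hδ _ (fun x y => rfl)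
end

section
/- Let X be a finite set and μ a probability mass on the 2-element subsets of X, with μ̄(x) = ∑_{y≠x} μ({x,y}). Then ∑ over ordered triples (x,y,z) of distinct elements of X of μ̄(x)·μ({x,y})·μ({y,z})·μ̄(z) is at most 8/27. -/
open Finset

section Aux

variable {X : Type*} [Fintype X] [DecidableEq X]

lemma aux_sum_le_one (μ : Sym2 X → ℝ) (hnonneg : ∀ e, 0 ≤ μ e)
    (htotal : ∑ e : Sym2 X, μ e = 1) (s : Finset (Sym2 X)) : ∑ e ∈ s, μ e ≤ 1 := by
  rw [← htotal]
  exact sum_le_sum_of_subset_of_nonneg (subset_univ s) (fun e _ _ => hnonneg e)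

lemma aux_fiber_card (e : Sym2 X) (s : Finset (X × X)) :
    (s.filter (fun p => Sym2.mk p.1 p.2 = e)).card ≤ 2 := by
  induction e using Sym2.ind with
  | _ a b =>
    have hsub : s.filter (fun p => Sym2.mk p.1 p.2 = s(a, b)) ⊆ {(a, b), (b, a)} := by
      intro p hp
      simp only [Finset.mem_filter] at hp
      obtain ⟨-, hp2⟩ := hp
      obtain ⟨p1, p2⟩ := p
      have h := Sym2.eq_iff.mp hp2
      simp only [Finset.mem_insert, Finset.mem_singleton, Prod.mk.injEq]
      tauto
    refine le_trans (Finset.card_le_card hsub) (le_trans (Finset.card_insert_le _ _) ?_)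
    simp

end Aux

theorem stmt_12 {X : Type*} [Fintype X] [DecidableEq X] (μ : Sym2 X → ℝ)
    (hnonneg : ∀ e, 0 ≤ μ e) (hdiag : ∀ x, μ s(x, x) = 0)
    (htotal : ∑ e : Sym2 X, μ e = 1)
    (μbar : X → ℝ) (hμbar : ∀ x, μbar x = ∑ y ∈ Finset.univ \ {x}, μ s(x, y)) :
    ∑ t ∈ Finset.univ.filter
        (fun t : X × X × X => t.1 ≠ t.2.1 ∧ t.1 ≠ t.2.2 ∧ t.2.1 ≠ t.2.2),
      μbar t.1 * μ s(t.1, t.2.1) * μ s(t.2.1, t.2.2) * μbar t.2.2 ≤ 8 / 27 := by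
  classical
  have hbar_nonneg : ∀ x, 0 ≤ μbar x := fun x => by
    rw [hμbar]; exact sum_nonneg fun y _ => hnonneg _
  -- μbar x ≤ 1
  have hbar_le_one : ∀ x, μbar x ≤ 1 := by
    intro x
    rw [hμbar]
    have hinj : ∀ u ∈ Finset.univ \ ({x} : Finset X), ∀ v ∈ Finset.univ \ ({x} : Finset X),
        s(x, u) = s(x, v) → u = v := by
      intro u hu v hv h
      rw [Sym2.eq_iff] at h
      rcases h with ⟨-, h⟩ | ⟨h1, h2⟩
      · exact h
      · simp only [mem_sdiff, mem_univ, mem_singleton, true_and] at hu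
        exact absurd h2 hu
    calc ∑ y ∈ Finset.univ \ {x}, μ s(x, y)
        = ∑ e ∈ (Finset.univ \ {x}).image (fun y => s(x, y)), μ e := (sum_image hinj).symm
      _ ≤ 1 := aux_sum_le_one μ hnonneg htotal _
  -- the key disjointness inequality
  have hkey : ∀ x y : X, x ≠ y → μbar x + (μbar y - μ s(x, y)) ≤ 1 := by
    intro x y hxy
    have hx : x ∈ Finset.univ \ ({y} : Finset X) := by simp [hxy]
    have e2 : μbar y - μ s(x, y) = ∑ z ∈ (Finset.univ \ ({y} : Finset X)).erase x, μ s(y, z) := by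
      rw [Finset.sum_erase_eq_sub hx, ← hμbar y]
      congr 1
      exact congrArg μ Sym2.eq_swap
    rw [hμbar x, e2]
    set A : Finset (Sym2 X) := (Finset.univ \ ({x} : Finset X)).image (fun u => s(x, u)) with hA
    set B : Finset (Sym2 X) :=
      ((Finset.univ \ ({y} : Finset X)).erase x).image (fun z => s(y, z)) with hB
    have hinjA : ∀ u ∈ Finset.univ \ ({x} : Finset X), ∀ v ∈ Finset.univ \ ({x} : Finset X),
        s(x, u) = s(x, v) → u = v := by
      intro u hu v hv h
      rw [Sym2.eq_iff] at h
      rcases h with ⟨-, h⟩ | ⟨h1, h2⟩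
      · exact h
      · simp only [mem_sdiff, mem_univ, mem_singleton, true_and] at hu
        exact absurd h2 hu
    have hinjB : ∀ u ∈ (Finset.univ \ ({y} : Finset X)).erase x,
        ∀ v ∈ (Finset.univ \ ({y} : Finset X)).erase x, s(y, u) = s(y, v) → u = v := by
      intro u hu v hv h
      rw [Sym2.eq_iff] at h
      rcases h with ⟨-, h⟩ | ⟨h1, h2⟩
      · exact h
      · have := Finset.mem_erase.mp hu
        simp only [mem_sdiff, mem_univ, mem_singleton, true_and] at this
        exact absurd h2 this.2
    have hdisj : Disjoint A B := by
      rw [Finset.disjoint_left]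
      intro e heA heB
      rw [hA, Finset.mem_image] at heA
      rw [hB, Finset.mem_image] at heB
      obtain ⟨u, hu, rfl⟩ := heA
      obtain ⟨z, hz, hez⟩ := heB
      have hz' := Finset.mem_erase.mp hz
      simp only [mem_sdiff, mem_univ, mem_singleton, true_and] at hz'
      rw [Sym2.eq_iff] at hez
      rcases hez with ⟨h1, h2⟩ | ⟨h1, h2⟩
      · exact hxy h1.symm
      · exact hz'.1 h2
    calc (∑ u ∈ Finset.univ \ {x}, μ s(x, u))
          + ∑ z ∈ (Finset.univ \ ({y} : Finset X)).erase x, μ s(y, z)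
        = (∑ e ∈ A, μ e) + ∑ e ∈ B, μ e := by
          rw [hA, hB, sum_image hinjA, sum_image hinjB]
      _ = ∑ e ∈ A ∪ B, μ e := (Finset.sum_union hdisj).symm
      _ ≤ 1 := aux_sum_le_one μ hnonneg htotal _
  -- sum of μbar is at most 2
  have hsum2 : ∑ x, μbar x ≤ 2 := by
    have hset : ∀ x : X, Finset.univ.filter (fun y => x ≠ y) = Finset.univ \ {x} := by
      intro x
      ext y
      simp [eq_comm, ne_comm]
    have e1 : ∑ x, μbar x
        = ∑ p ∈ (Finset.univ ×ˢ Finset.univ).filter (fun p : X × X => p.1 ≠ p.2),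
            μ (Sym2.mk p.1 p.2) := by
      rw [Finset.sum_filter, Finset.sum_product]
      refine Finset.sum_congr rfl fun x _ => ?_
      rw [hμbar, ← hset x, Finset.sum_filter]
    rw [e1]
    set s : Finset (X × X) := (Finset.univ ×ˢ Finset.univ).filter (fun p : X × X => p.1 ≠ p.2)
      with hs
    have e2 : ∑ p ∈ s, μ (Sym2.mk p.1 p.2)
        = ∑ e : Sym2 X, ∑ p ∈ s.filter (fun p => Sym2.mk p.1 p.2 = e), μ (Sym2.mk p.1 p.2) :=
      (Finset.sum_fiberwise_of_maps_to (fun p _ => Finset.mem_univ _) _).symm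
    rw [e2]
    have e3 : ∀ e : Sym2 X, ∑ p ∈ s.filter (fun p => Sym2.mk p.1 p.2 = e), μ (Sym2.mk p.1 p.2) ≤ 2 * μ e := by
      intro e
      have : ∑ p ∈ s.filter (fun p => Sym2.mk p.1 p.2 = e), μ (Sym2.mk p.1 p.2)
          = ((s.filter (fun p => Sym2.mk p.1 p.2 = e)).card : ℝ) * μ e := by
        rw [Finset.sum_congr rfl (fun p hp => by rw [(Finset.mem_filter.mp hp).2])]
        rw [Finset.sum_const, nsmul_eq_mul]
      rw [this]
      have hc : ((s.filter (fun p => Sym2.mk p.1 p.2 = e)).card : ℝ) ≤ 2 := by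
        exact_mod_cast aux_fiber_card e s
      exact mul_le_mul_of_nonneg_right hc (hnonneg e)
    calc ∑ e : Sym2 X, ∑ p ∈ s.filter (fun p => Sym2.mk p.1 p.2 = e), μ (Sym2.mk p.1 p.2)
        ≤ ∑ e : Sym2 X, 2 * μ e := Finset.sum_le_sum fun e _ => e3 e
      _ = 2 * ∑ e : Sym2 X, μ e := by rw [Finset.mul_sum]
      _ = 2 := by rw [htotal]; norm_num
  set F := Finset.univ.filter
      (fun t : X × X × X => t.1 ≠ t.2.1 ∧ t.1 ≠ t.2.2 ∧ t.2.1 ≠ t.2.2) with hF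
  -- Step 1 : symmetrization + AM-GM
  have hswap : ∑ t ∈ F, μbar t.2.2 ^ 2 * (μ s(t.1, t.2.1) * μ s(t.2.1, t.2.2))
      = ∑ t ∈ F, μbar t.1 ^ 2 * (μ s(t.1, t.2.1) * μ s(t.2.1, t.2.2)) := by
    refine Finset.sum_nbij' (fun t => (t.2.2, t.2.1, t.1)) (fun t => (t.2.2, t.2.1, t.1))
      ?_ ?_ ?_ ?_ ?_
    · intro t ht
      rw [hF, Finset.mem_filter] at ht ⊢
      obtain ⟨-, h1, h2, h3⟩ := ht
      exact ⟨Finset.mem_univ _, h3.symm, h2.symm, h1.symm⟩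
    · intro t ht
      rw [hF, Finset.mem_filter] at ht ⊢
      obtain ⟨-, h1, h2, h3⟩ := ht
      exact ⟨Finset.mem_univ _, h3.symm, h2.symm, h1.symm⟩
    · intro t _; rfl
    · intro t _; rfl
    · intro t _
      show μbar t.2.2 ^ 2 * (μ s(t.1, t.2.1) * μ s(t.2.1, t.2.2))
        = μbar t.2.2 ^ 2 * (μ s(t.2.2, t.2.1) * μ s(t.2.1, t.1))
      rw [show s(t.2.2, t.2.1) = s(t.2.1, t.2.2) from Sym2.eq_swap,
        show s(t.2.1, t.1) = s(t.1, t.2.1) from Sym2.eq_swap]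
      ring
  have h1 : ∑ t ∈ F, μbar t.1 * μ s(t.1, t.2.1) * μ s(t.2.1, t.2.2) * μbar t.2.2
      ≤ ∑ t ∈ F, μbar t.1 ^ 2 * (μ s(t.1, t.2.1) * μ s(t.2.1, t.2.2)) := by
    have h2S : 2 * ∑ t ∈ F, μbar t.1 * μ s(t.1, t.2.1) * μ s(t.2.1, t.2.2) * μbar t.2.2
        ≤ (∑ t ∈ F, μbar t.1 ^ 2 * (μ s(t.1, t.2.1) * μ s(t.2.1, t.2.2)))
          + ∑ t ∈ F, μbar t.2.2 ^ 2 * (μ s(t.1, t.2.1) * μ s(t.2.1, t.2.2)) := by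
      rw [Finset.mul_sum, ← Finset.sum_add_distrib]
      refine Finset.sum_le_sum fun t _ => ?_
      have hw : 0 ≤ μ s(t.1, t.2.1) * μ s(t.2.1, t.2.2) :=
        mul_nonneg (hnonneg _) (hnonneg _)
      nlinarith [sq_nonneg (μbar t.1 - μbar t.2.2), hw]
    rw [hswap] at h2S
    linarith
  -- Step 2 : sum out the last coordinate
  have h2 : ∑ t ∈ F, μbar t.1 ^ 2 * (μ s(t.1, t.2.1) * μ s(t.2.1, t.2.2))
      = ∑ x, ∑ y ∈ Finset.univ \ {x},
          μbar x ^ 2 * μ s(x, y) * (μbar y - μ s(x, y)) := by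
    rw [hF, Finset.sum_filter, Fintype.sum_prod_type]
    refine Finset.sum_congr rfl fun x _ => ?_
    rw [Fintype.sum_prod_type]
    have hset : Finset.univ.filter (fun y : X => x ≠ y) = Finset.univ \ {x} := by
      ext y; simp [eq_comm, ne_comm]
    rw [← hset, Finset.sum_filter]
    refine Finset.sum_congr rfl fun y _ => ?_
    by_cases hxy : x = y
    · simp [hxy]
    · rw [if_pos hxy]
      have hcond : ∀ z : X, (x ≠ y ∧ x ≠ z ∧ y ≠ z) ↔ z ∈ (Finset.univ \ ({y} : Finset X)).erase x := by
        intro z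
        simp only [Finset.mem_erase, mem_sdiff, mem_univ, mem_singleton, true_and]
        constructor
        · rintro ⟨-, h2, h3⟩
          exact ⟨fun h => h2 h.symm, fun h => h3 h.symm⟩
        · rintro ⟨h2, h3⟩
          exact ⟨hxy, fun h => h2 h.symm, fun h => h3 h.symm⟩
      have hx' : x ∈ Finset.univ \ ({y} : Finset X) := by simp [hxy]
      rw [← Finset.sum_filter,
        show Finset.univ.filter (fun z => x ≠ y ∧ x ≠ z ∧ y ≠ z)
            = (Finset.univ \ ({y} : Finset X)).erase x from by
          ext z
          simp only [Finset.mem_filter, mem_univ, true_and]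
          exact hcond z]
      have hr : ∀ z, μbar x ^ 2 * (μ s(x, y) * μ s(y, z))
          = μbar x ^ 2 * μ s(x, y) * μ s(y, z) := fun z => by ring
      simp_rw [hr]
      rw [← Finset.mul_sum, Finset.sum_erase_eq_sub hx', ← hμbar y,
        show μ s(y, x) = μ s(x, y) from congrArg μ Sym2.eq_swap]
  -- Step 3 : key inequality
  have h3 : ∑ x, ∑ y ∈ Finset.univ \ {x}, μbar x ^ 2 * μ s(x, y) * (μbar y - μ s(x, y))
      ≤ ∑ x, ∑ y ∈ Finset.univ \ {x}, μbar x ^ 2 * μ s(x, y) * (1 - μbar x) := by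
    refine Finset.sum_le_sum fun x _ => Finset.sum_le_sum fun y hy => ?_
    have hxy : x ≠ y := fun h => (Finset.mem_sdiff.mp hy).2 (by simp [h])
    have hk := hkey x y hxy
    have hc : 0 ≤ μbar x ^ 2 * μ s(x, y) := mul_nonneg (sq_nonneg _) (hnonneg _)
    exact mul_le_mul_of_nonneg_left (by linarith) hc
  -- Step 4 : sum out y
  have h4 : ∑ x, ∑ y ∈ Finset.univ \ {x}, μbar x ^ 2 * μ s(x, y) * (1 - μbar x)
      = ∑ x, μbar x ^ 2 * (1 - μbar x) * μbar x := by
    refine Finset.sum_congr rfl fun x _ => ?_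
    have hr : ∀ y, μbar x ^ 2 * μ s(x, y) * (1 - μbar x)
        = μbar x ^ 2 * (1 - μbar x) * μ s(x, y) := fun y => by ring
    simp_rw [hr]
    rw [← Finset.mul_sum, ← hμbar x]
  -- Step 5 : scalar inequality t³(1-t) ≤ (4/27)t on [0,1]
  have h5 : ∑ x, μbar x ^ 2 * (1 - μbar x) * μbar x ≤ (4 / 27) * ∑ x, μbar x := by
    rw [Finset.mul_sum]
    refine Finset.sum_le_sum fun x _ => ?_
    have h0 := hbar_nonneg x
    have h1' := hbar_le_one x
    nlinarith [mul_nonneg (mul_nonneg h0 (sq_nonneg (3 * μbar x - 2)))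
      (by linarith : (0 : ℝ) ≤ 3 * μbar x + 1)]
  have h6 : (4 / 27 : ℝ) * ∑ x, μbar x ≤ 8 / 27 := by
    nlinarith [hsum2]
  rw [h2] at h1
  rw [h4] at h3
  linarith
end

section
/- Let X be a finite set, μ a probability mass on the 2-element subsets of X, H a graph on m ≥ 1 edges with no isolated vertices, and k a positive integer. Then ∑ over copies H' of H with V(H') ⊆ X of (∏_{e ∈ E(H')} μ(e))^k is at most (k!)^m / (km)!. -/
open Finset

/-- `μ` is a probability mass on the 2-element subsets of `X`, encoded as a symmetric
function on `Sym2 X` vanishing on diagonal elements; copies of `H` with vertices in `X`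
are subgraphs of the complete graph `⊤ : SimpleGraph X` isomorphic to `H`. -/
theorem stmt_14 {W X : Type*} [Fintype W] [Fintype X]
    (H : SimpleGraph W) [DecidableRel H.Adj] (m k : ℕ) (hm : H.edgeFinset.card = m)
    (hm1 : 1 ≤ m) (hk : 0 < k) (hiso : ∀ w, 0 < H.degree w)
    (μ : Sym2 X → ℝ) (hnonneg : ∀ e, 0 ≤ μ e) (hdiag : ∀ x, μ s(x, x) = 0)
    (htotal : ∑ e : Sym2 X, μ e = 1) :
    ∑ᶠ H' ∈ {H' : (⊤ : SimpleGraph X).Subgraph | Nonempty (H'.coe ≃g H)},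
        (∏ᶠ e ∈ H'.edgeSet, μ e) ^ k ≤
      ((Nat.factorial k : ℝ)) ^ m / (Nat.factorial (k * m) : ℝ) := by
  classical
  set S := {H' : (⊤ : SimpleGraph X).Subgraph | Nonempty (H'.coe ≃g H)} with hS_def
  -- Finiteness of the type of subgraphs
  have hfinty : Finite ((⊤ : SimpleGraph X).Subgraph) := by
    have hinj : Function.Injective
        (fun H' : (⊤ : SimpleGraph X).Subgraph => (H'.verts, H'.Adj)) := by
      intro a b h
      simp only [Prod.mk.injEq] at h
      exact SimpleGraph.Subgraph.ext h.1 h.2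
    exact Finite.of_injective _ hinj
  have hSfin : S.Finite := Set.toFinite S
  set T : Finset ((⊤ : SimpleGraph X).Subgraph) := hSfin.toFinset with hT_def
  -- the edge finset of a subgraph
  have hEfin : ∀ H' : (⊤ : SimpleGraph X).Subgraph, H'.edgeSet.Finite :=
    fun H' => Set.toFinite _
  set E : (⊤ : SimpleGraph X).Subgraph → Finset (Sym2 X) :=
    fun H' => (hEfin H').toFinset with hE_def
  have hEmem : ∀ H' e, e ∈ E H' ↔ e ∈ H'.edgeSet := by
    intro H' e; exact (hEfin H').mem_toFinset
  -- every subgraph in S has exactly m edges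
  have hcard : ∀ H' ∈ T, (E H').card = m := by
    intro H' hH'
    have hH'S : H' ∈ S := (Set.Finite.mem_toFinset hSfin).1 hH'
    obtain ⟨φ⟩ := hH'S
    have hinj : Function.Injective (Sym2.map (Subtype.val : H'.verts → X)) :=
      Sym2.map.injective Subtype.val_injective
    have e1 : H'.coe.edgeSet ≃ H'.edgeSet :=
      (Equiv.Set.image _ _ hinj).trans
        (Equiv.setCongr (SimpleGraph.Subgraph.image_coe_edgeSet_coe H'))
    have e2 : H'.edgeSet ≃ H.edgeSet := e1.symm.trans φ.mapEdgeSet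
    have : Nat.card H'.edgeSet = Nat.card H.edgeSet := Nat.card_congr e2
    have hE' : (E H').card = Nat.card H'.edgeSet := by
      rw [Nat.card_eq_card_finite_toFinset (hEfin H')]
    have hH : Nat.card H.edgeSet = m := by
      rw [Nat.card_eq_fintype_card, ← Set.toFinset_card]
      exact hm
    rw [hE', this, hH]
  -- no isolated vertices: verts are determined by edges
  have hverts : ∀ H' ∈ T, ∀ v, v ∈ H'.verts ↔ ∃ w, H'.Adj v w := by
    intro H' hH' v
    constructor
    · intro hv
      have hH'S : H' ∈ S := (Set.Finite.mem_toFinset hSfin).1 hH'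
      obtain ⟨φ⟩ := hH'S
      obtain ⟨w', hw'⟩ :=
        (SimpleGraph.degree_pos_iff_exists_adj _ _).1 (hiso (φ ⟨v, hv⟩))
      refine ⟨(φ.symm w' : H'.verts), ?_⟩
      have : H'.coe.Adj ⟨v, hv⟩ (φ.symm w') := by
        rw [← φ.map_rel_iff]
        simpa using hw'
      exact this
    · rintro ⟨w, hw⟩
      exact H'.edge_vert hw
  -- subgraphs in S are determined by their edge sets
  have hEinj : ∀ A ∈ T, ∀ B ∈ T, A.edgeSet = B.edgeSet → A = B := by
    intro A hA B hB hE
    have hAdj : A.Adj = B.Adj := by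
      ext v w
      rw [← SimpleGraph.Subgraph.mem_edgeSet, ← SimpleGraph.Subgraph.mem_edgeSet, hE]
    apply SimpleGraph.Subgraph.ext
    · ext v
      rw [hverts A hA v, hverts B hB v, hAdj]
    · exact hAdj
  -- the function into piAntidiag
  set F : (⊤ : SimpleGraph X).Subgraph → (Sym2 X → ℕ) :=
    fun H' e => if e ∈ E H' then k else 0 with hF_def
  have hFsum : ∀ H' ∈ T, ∑ e : Sym2 X, F H' e = k * m := by
    intro H' hH'
    simp only [hF_def]
    rw [Finset.sum_ite_mem, Finset.univ_inter, Finset.sum_const, hcard H' hH',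
      smul_eq_mul, mul_comm]
  have hFmem : ∀ H' ∈ T, F H' ∈ Finset.piAntidiag Finset.univ (k * m) := by
    intro H' hH'
    rw [Finset.mem_piAntidiag]
    exact ⟨hFsum H' hH', fun i _ => Finset.mem_univ i⟩
  have hFinj : ∀ A ∈ T, ∀ B ∈ T, F A = F B → A = B := by
    intro A hA B hB hFAB
    apply hEinj A hA B hB
    ext e
    rw [← hEmem, ← hEmem]
    have := congrFun hFAB e
    simp only [hF_def] at this
    constructor <;> intro h
    · by_contra hc
      rw [if_pos h, if_neg hc] at this
      exact hk.ne' this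
    · by_contra hc
      rw [if_neg hc, if_pos h] at this
      exact hk.ne' this.symm
  -- multinomial coefficient computation
  have hC0 : (0:ℝ) < (Nat.factorial (k * m) : ℝ) / (Nat.factorial k : ℝ) ^ m := by
    positivity
  have hmult : ∀ H' ∈ T, (Nat.multinomial Finset.univ (F H') : ℝ) =
      (Nat.factorial (k * m) : ℝ) / (Nat.factorial k : ℝ) ^ m := by
    intro H' hH'
    have hspec := Nat.multinomial_spec (Finset.univ : Finset (Sym2 X)) (F H')
    have hprodfact : ∏ e : Sym2 X, Nat.factorial (F H' e) = (Nat.factorial k) ^ m := by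
      simp only [hF_def, apply_ite Nat.factorial, Nat.factorial_zero]
      rw [Finset.prod_ite_mem, Finset.univ_inter, Finset.prod_const, hcard H' hH']
    rw [hprodfact, hFsum H' hH'] at hspec
    have : ((Nat.factorial k : ℝ) ^ m) * (Nat.multinomial Finset.univ (F H') : ℝ) =
        (Nat.factorial (k * m) : ℝ) := by
      exact_mod_cast congrArg (Nat.cast : ℕ → ℝ) hspec
    field_simp
    linarith [this]
  -- product computation
  have hprod : ∀ H' ∈ T, ∏ e : Sym2 X, μ e ^ (F H' e) = (∏ e ∈ E H', μ e) ^ k := by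
    intro H' hH'
    simp only [hF_def, pow_ite, pow_zero]
    rw [Finset.prod_ite_mem, Finset.univ_inter, ← Finset.prod_pow]
  -- the multinomial expansion bound
  have hexpand := Finset.sum_pow_eq_sum_piAntidiag (Finset.univ : Finset (Sym2 X)) μ (k * m)
  rw [htotal, one_pow] at hexpand
  have hbound : ∑ H' ∈ T, (Nat.multinomial Finset.univ (F H') : ℝ) *
      ∏ e : Sym2 X, μ e ^ (F H' e) ≤ 1 := by
    rw [hexpand]
    rw [← Finset.sum_image (f := fun g => (Nat.multinomial Finset.univ g : ℝ) *
      ∏ e : Sym2 X, μ e ^ g e) (g := F) (fun A hA B hB => hFinj A hA B hB)]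
    apply Finset.sum_le_sum_of_subset_of_nonneg
    · intro g hg
      obtain ⟨H', hH', rfl⟩ := Finset.mem_image.1 hg
      exact hFmem H' hH'
    · intro g _ _
      have : (0:ℝ) ≤ ∏ e : Sym2 X, μ e ^ g e :=
        Finset.prod_nonneg fun e _ => pow_nonneg (hnonneg e) _
      positivity
  have hbound2 : ((Nat.factorial (k * m) : ℝ) / (Nat.factorial k : ℝ) ^ m) *
      ∑ H' ∈ T, (∏ e ∈ E H', μ e) ^ k ≤ 1 := by
    rw [Finset.mul_sum]
    calc ∑ H' ∈ T, ((Nat.factorial (k * m) : ℝ) / (Nat.factorial k : ℝ) ^ m) *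
          (∏ e ∈ E H', μ e) ^ k
        = ∑ H' ∈ T, (Nat.multinomial Finset.univ (F H') : ℝ) *
          ∏ e : Sym2 X, μ e ^ (F H' e) := by
          refine Finset.sum_congr rfl fun H' hH' => ?_
          rw [hmult H' hH', hprod H' hH']
      _ ≤ 1 := hbound
  -- rewrite the goal as a finite sum
  have hgoal : ∑ᶠ H' ∈ S, (∏ᶠ e ∈ H'.edgeSet, μ e) ^ k =
      ∑ H' ∈ T, (∏ e ∈ E H', μ e) ^ k := by
    rw [← hSfin.coe_toFinset, finsum_mem_coe_finset]
    refine Finset.sum_congr rfl fun H' _ => ?_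
    congr 1
    rw [← (hEfin H').coe_toFinset, finprod_mem_coe_finset]
  rw [hgoal]
  rw [le_div_iff₀ (by positivity : (0:ℝ) < (Nat.factorial (k * m) : ℝ))]
  calc (∑ H' ∈ T, (∏ e ∈ E H', μ e) ^ k) * (Nat.factorial (k * m) : ℝ)
      = ((Nat.factorial k : ℝ) ^ m) *
        (((Nat.factorial (k * m) : ℝ) / (Nat.factorial k : ℝ) ^ m) *
          ∑ H' ∈ T, (∏ e ∈ E H', μ e) ^ k) := by
        field_simp
    _ ≤ ((Nat.factorial k : ℝ) ^ m) * 1 := by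
        apply mul_le_mul_of_nonneg_left hbound2 (by positivity)
    _ = (Nat.factorial k : ℝ) ^ m := mul_one _
end
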